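/- Let G be a group acting freely by orientation-preserving homeomorphisms on the circle S¹ (i.e., every nontrivial element has no fixed point). Then G is abelian. -/
import Mathlib

open Set Function AddCircle

namespace Holder13


local notation "τ" => CircleDeg1Lift.translationNumber

/-! ### Generic monoid/lattice lemmas -/

lemma mul_pow_succ {M : Type*} [Monoid M] (a b : M) (n : ℕ) :
    (a * b) ^ (n + 1) = a * (b * a) ^ n * b := by
  induction n with
  | zero => simp
  | succ n ih => rw [pow_succ, ih, pow_succ]; simp only [mul_assoc]

lemma cd1_le_iff {f g : CircleDeg1Lift} : f ≤ g ↔ ∀ x, f x ≤ g x := Iff.rfl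

lemma cd1_mul_le_mul {f₁ f₂ g₁ g₂ : CircleDeg1Lift} (hf : f₁ ≤ f₂) (hg : g₁ ≤ g₂) :
    f₁ * g₁ ≤ f₂ * g₂ := by
  intro x
  rw [CircleDeg1Lift.mul_apply, CircleDeg1Lift.mul_apply]
  exact le_trans (hf (g₁ x)) (f₂.mono (hg x))

lemma cd1_pow_mul_pow_le {A B : CircleDeg1Lift} (h : B * A ≤ A * B) (n : ℕ) :
    (A * B) ^ n ≤ A ^ n * B ^ n := by
  induction n with
  | zero => simp
  | succ n ih =>
      rw [mul_pow_succ]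
      calc A * (B * A) ^ n * B ≤ A * (A * B) ^ n * B :=
            cd1_mul_le_mul (cd1_mul_le_mul le_rfl (CircleDeg1Lift.pow_mono h n)) le_rfl
        _ ≤ A * (A ^ n * B ^ n) * B := cd1_mul_le_mul (cd1_mul_le_mul le_rfl ih) le_rfl
        _ = A ^ (n + 1) * B ^ (n + 1) := by rw [pow_succ' A, pow_succ B]; simp only [mul_assoc]

lemma cd1_le_pow_mul_pow {A B : CircleDeg1Lift} (h : B * A ≤ A * B) (n : ℕ) :
    B ^ n * A ^ n ≤ (B * A) ^ n := by
  induction n with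
  | zero => simp
  | succ n ih =>
      rw [mul_pow_succ]
      calc B ^ (n + 1) * A ^ (n + 1) = B * (B ^ n * A ^ n) * A := by
            rw [pow_succ' B, pow_succ A]; simp only [mul_assoc]
        _ ≤ B * (B * A) ^ n * A := cd1_mul_le_mul (cd1_mul_le_mul le_rfl ih) le_rfl
        _ ≤ B * (A * B) ^ n * A :=
            cd1_mul_le_mul (cd1_mul_le_mul le_rfl (CircleDeg1Lift.pow_mono h n)) le_rfl

/-! ### Translation number estimates -/

lemma tau_mul_upper (A B : CircleDeg1Lift) : τ (A * B) ≤ A 0 + B 0 + 2 := by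
  apply CircleDeg1Lift.translationNumber_le_of_le_add
  intro x
  rw [CircleDeg1Lift.mul_apply]
  have h1 : A (B x) ≤ A 0 + ⌈B x⌉ := A.map_le_of_map_zero (B x)
  have h2 : (⌈B x⌉ : ℝ) < B x + 1 := Int.ceil_lt_add_one _
  have h3 : B x ≤ B 0 + ⌈x⌉ := B.map_le_of_map_zero x
  have h4 : (⌈x⌉ : ℝ) < x + 1 := Int.ceil_lt_add_one _
  nlinarith

lemma tau_mul_lower (A B : CircleDeg1Lift) : A 0 + B 0 - 2 ≤ τ (A * B) := by
  apply CircleDeg1Lift.le_translationNumber_of_add_le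
  intro x
  rw [CircleDeg1Lift.mul_apply]
  have h1 : A 0 + ⌊B x⌋ ≤ A (B x) := A.le_map_of_map_zero (B x)
  have h2 : B x - 1 < (⌊B x⌋ : ℝ) := Int.sub_one_lt_floor _
  have h3 : B 0 + ⌊x⌋ ≤ B x := B.le_map_of_map_zero x
  have h4 : x - 1 < (⌊x⌋ : ℝ) := Int.sub_one_lt_floor _
  nlinarith

lemma pow_zero_near (A : CircleDeg1Lift) (n : ℕ) :
    |(A ^ n) 0 - n * τ A| ≤ 1 := by
  have := (A ^ n).dist_map_zero_translationNumber_le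
  rw [CircleDeg1Lift.translationNumber_pow] at this
  rwa [Real.dist_eq] at this

lemma tau_add_of_le {A B : CircleDeg1Lift} (hconj : τ (A * B) = τ (B * A))
    (h : B * A ≤ A * B) : τ (A * B) = τ A + τ B := by
  have upper : ∀ n : ℕ, (n : ℝ) * τ (A * B) ≤ n * τ A + n * τ B + 4 := by
    intro n
    have h1 : τ ((A * B) ^ n) ≤ τ (A ^ n * B ^ n) :=
      CircleDeg1Lift.translationNumber_mono (cd1_pow_mul_pow_le h n)
    rw [CircleDeg1Lift.translationNumber_pow] at h1
    have h2 := tau_mul_upper (A ^ n) (B ^ n)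
    have h3 := abs_le.1 (pow_zero_near A n)
    have h4 := abs_le.1 (pow_zero_near B n)
    nlinarith [h1, h2, h3.1, h3.2, h4.1, h4.2]
  have lower : ∀ n : ℕ, (n : ℝ) * τ B + n * τ A - 4 ≤ n * τ (B * A) := by
    intro n
    have h1 : τ (B ^ n * A ^ n) ≤ τ ((B * A) ^ n) :=
      CircleDeg1Lift.translationNumber_mono (cd1_le_pow_mul_pow h n)
    rw [CircleDeg1Lift.translationNumber_pow] at h1
    have h2 := tau_mul_lower (B ^ n) (A ^ n)
    have h3 := abs_le.1 (pow_zero_near A n)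
    have h4 := abs_le.1 (pow_zero_near B n)
    nlinarith [h1, h2, h3.1, h3.2, h4.1, h4.2]
  have key1 : τ (A * B) ≤ τ A + τ B := by
    by_contra hlt
    push_neg at hlt
    set ε := τ (A * B) - (τ A + τ B) with hε
    have hε0 : 0 < ε := by simp [hε]; linarith
    obtain ⟨n, hn⟩ := exists_nat_gt (4 / ε)
    have h5 : 4 < (n : ℝ) * ε := by
      have := mul_lt_mul_of_pos_right hn hε0
      rwa [div_mul_cancel₀ 4 (ne_of_gt hε0)] at this
    have h6 : (n : ℝ) * ε ≤ 4 := by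
      rw [hε, mul_sub, mul_add]; linarith [upper n]
    linarith
  have key2 : τ A + τ B ≤ τ (B * A) := by
    by_contra hlt
    push_neg at hlt
    set ε := (τ A + τ B) - τ (B * A) with hε
    have hε0 : 0 < ε := by simp [hε]; linarith
    obtain ⟨n, hn⟩ := exists_nat_gt (4 / ε)
    have h5 : 4 < (n : ℝ) * ε := by
      have := mul_lt_mul_of_pos_right hn hε0
      rwa [div_mul_cancel₀ 4 (ne_of_gt hε0)] at this
    have h6 : (n : ℝ) * ε ≤ 4 := by
      rw [hε, sub_eq_add_neg, mul_add, mul_add, mul_neg]; linarith [lower n]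
    linarith
  rw [hconj] at key1
  rw [hconj]
  linarith


variable {G : Type*} [Group G] [MulAction G (AddCircle (1 : ℝ))]

/-- `F` is a (monotone degree-one, continuous) lift of the action of `g` on the circle. -/
def IsLiftOf (F : CircleDeg1Lift) (g : G) : Prop :=
  Continuous F ∧ ∀ x : ℝ, ((F x : ℝ) : AddCircle (1 : ℝ)) = g • (x : AddCircle (1 : ℝ))

lemma coe_eq_coe_iff {x y : ℝ} :
    (x : AddCircle (1 : ℝ)) = (y : AddCircle (1 : ℝ)) ↔ ∃ n : ℤ, y = x + n := by
  rw [QuotientAddGroup.eq_iff_sub_mem]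
  constructor
  · rintro h
    obtain ⟨n, hn⟩ := AddSubgroup.mem_zmultiples_iff.mp h
    rw [zsmul_eq_mul, mul_one] at hn
    exact ⟨-n, by push_cast; linarith⟩
  · rintro ⟨n, rfl⟩
    refine AddSubgroup.mem_zmultiples_iff.mpr ⟨-n, ?_⟩
    rw [zsmul_eq_mul, mul_one]; push_cast; ring

lemma continuous_coe : Continuous ((↑) : ℝ → AddCircle (1 : ℝ)) :=
  AddCircle.continuous_mk' 1

lemma exists_lift (hcont : ∀ g : G, Continuous fun x : AddCircle (1 : ℝ) => g • x)
    (hfree : ∀ g : G, g ≠ 1 → ∀ x : AddCircle (1 : ℝ), g • x ≠ x) (g : G) :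
    ∃ F : CircleDeg1Lift, IsLiftOf F g := by
  by_cases hg : g = 1
  · refine ⟨1, ?_, ?_⟩
    · rw [CircleDeg1Lift.coe_one]; exact continuous_id
    · intro x; rw [CircleDeg1Lift.coe_one]; simp [hg]
  haveI : Fact ((0 : ℝ) < 1) := ⟨one_pos⟩
  set ψ : ℝ → AddCircle (1 : ℝ) := fun t => g • (t : AddCircle (1 : ℝ)) - (t : AddCircle (1 : ℝ))
    with hψ
  have hψcont : Continuous ψ := ((hcont g).comp continuous_coe).sub continuous_coe
  have hψne : ∀ t, ψ t ≠ 0 := fun t => sub_ne_zero.mpr (hfree g hg _)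
  set F0 : ℝ → ℝ := fun t => t + ((equivIco 1 0 (ψ t) : Ico (0 : ℝ) (0 + 1)) : ℝ) with hF0
  have hrep : ∀ z : AddCircle (1 : ℝ), (((equivIco 1 0 z : Ico (0:ℝ) (0+1)) : ℝ) : AddCircle (1:ℝ)) = z := by
    intro z
    exact (equivIco (1:ℝ) 0).symm_apply_apply z
  have hlift : ∀ t : ℝ, ((F0 t : ℝ) : AddCircle (1 : ℝ)) = g • (t : AddCircle (1 : ℝ)) := by
    intro t
    have : ((F0 t : ℝ) : AddCircle (1 : ℝ))
        = (t : AddCircle (1:ℝ)) + (((equivIco 1 0 (ψ t) : Ico (0:ℝ) (0+1)) : ℝ) : AddCircle (1:ℝ)) := by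
      rw [hF0]; push_cast; rfl
    rw [this, hrep, hψ]
    rw [add_comm, sub_add_cancel]
  have hcontF : Continuous F0 := by
    refine continuous_id.add ?_
    refine continuous_subtype_val.comp ?_
    rw [continuous_iff_continuousAt]
    intro t
    refine (AddCircle.continuousAt_equivIco 1 0 ?_).comp hψcont.continuousAt
    simpa using hψne t
  have hper : ∀ n : ℤ, ∀ t : ℝ, F0 (t + n) = F0 t + n := by
    intro n t
    have hc : ((t + n : ℝ) : AddCircle (1 : ℝ)) = (t : AddCircle (1:ℝ)) :=
      coe_eq_coe_iff.mpr ⟨-n, by push_cast; ring⟩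
    have : ψ (t + n) = ψ t := by rw [hψ]; simp only [hc]
    rw [hF0]; simp only [this]; ring
  have hinj : Injective F0 := by
    intro s t hst
    have h1 : g • (s : AddCircle (1:ℝ)) = g • (t : AddCircle (1:ℝ)) := by
      rw [← hlift s, ← hlift t, hst]
    have h2 : (s : AddCircle (1:ℝ)) = (t : AddCircle (1:ℝ)) := (smul_left_cancel_iff g).mp h1
    obtain ⟨n, rfl⟩ := coe_eq_coe_iff.mp h2
    have := hper n s
    rw [this] at hst
    have hn : (n : ℝ) = 0 := by linarith
    norm_cast at hn
    simp [hn]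
  have hmono : Monotone F0 := by
    rcases hcontF.strictMono_of_inj hinj with h | h
    · exact h.monotone
    · exfalso
      have h01 : F0 1 < F0 0 := h one_pos
      have := hper 1 0
      simp at this
      rw [this] at h01
      linarith
  refine ⟨⟨⟨F0, hmono⟩, ?_⟩, hcontF, hlift⟩
  intro t
  have := hper 1 t
  push_cast at this
  exact this

lemma lift_mul {F H : CircleDeg1Lift} {g h : G} (hF : IsLiftOf F g) (hH : IsLiftOf H h) :
    IsLiftOf (F * H) (g * h) := by
  refine ⟨?_, ?_⟩
  · rw [CircleDeg1Lift.coe_mul]; exact hF.1.comp hH.1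
  · intro x
    rw [CircleDeg1Lift.mul_apply, hF.2, hH.2, mul_smul]

lemma lift_injective {F : CircleDeg1Lift} {g : G} (hF : IsLiftOf F g) : Injective F := by
  intro s t hst
  have h1 : g • (s : AddCircle (1:ℝ)) = g • (t : AddCircle (1:ℝ)) := by
    rw [← hF.2 s, ← hF.2 t, hst]
  obtain ⟨n, rfl⟩ := coe_eq_coe_iff.mp ((smul_left_cancel_iff g).mp h1)
  have h2 : F (s + (n:ℤ)) = F s + n := F.map_add_int s n
  rw [h2] at hst
  have hn : (n : ℝ) = 0 := by linarith
  norm_cast at hn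
  simp [hn]

lemma lift_isUnit {F : CircleDeg1Lift} {g : G} (hF : IsLiftOf F g) : IsUnit F :=
  CircleDeg1Lift.isUnit_iff_bijective.mpr
    ⟨lift_injective hF, (CircleDeg1Lift.continuous_iff_surjective (f := F)).mp hF.1⟩

lemma lift_inv {u : CircleDeg1Liftˣ} {g : G} (hF : IsLiftOf (↑u) g) :
    IsLiftOf (↑u⁻¹) g⁻¹ := by
  constructor
  · have h1 : ⇑((CircleDeg1Lift.toOrderIso u)⁻¹) = ⇑(↑u⁻¹ : CircleDeg1Lift) :=
      CircleDeg1Lift.coe_toOrderIso_inv u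
    rw [← h1]
    exact OrderIso.continuous _
  · intro x
    have h2 : (↑u : CircleDeg1Lift) ((↑u⁻¹ : CircleDeg1Lift) x) = x := by
      have : ((↑u : CircleDeg1Lift) * (↑u⁻¹ : CircleDeg1Lift)) x = x := by
        rw [← Units.val_mul, mul_inv_cancel]
        simp
      rwa [CircleDeg1Lift.mul_apply] at this
    have h3 := hF.2 ((↑u⁻¹ : CircleDeg1Lift) x)
    rw [h2] at h3
    exact eq_inv_smul_iff.mpr h3.symm

lemma int_ne_half (k : ℤ) : (k : ℝ) ≠ 1 / 2 := by
  intro hk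
  have h2 : ((2 * k : ℤ) : ℝ) = 1 := by push_cast; rw [hk]; ring
  have h3 : (2 * k : ℤ) = 1 := by exact_mod_cast h2
  omega

lemma lift_totality
    (hfree : ∀ g : G, g ≠ 1 → ∀ x : AddCircle (1 : ℝ), g • x ≠ x)
    {F H : CircleDeg1Lift} {g h : G} (hF : IsLiftOf F g) (hH : IsLiftOf H h) :
    F ≤ H ∨ H ≤ F := by
  by_contra hcon
  push_neg at hcon
  obtain ⟨h1, h2⟩ := hcon
  rw [cd1_le_iff] at h1 h2
  push_neg at h1 h2
  obtain ⟨v, hv⟩ := h1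
  obtain ⟨u, hu⟩ := h2
  set D : ℝ → ℝ := fun t => F t - H t with hD
  have hDcont : Continuous D := hF.1.sub hH.1
  have hDv : 0 < D v := by simp only [hD]; linarith
  have hDu : D u < 0 := by simp only [hD]; linarith
  -- a point where F and H agree
  have hzero : (0 : ℝ) ∈ uIcc (D v) (D u) :=
    Set.mem_uIcc.mpr (Or.inr ⟨le_of_lt hDu, le_of_lt hDv⟩)
  obtain ⟨w, -, hw⟩ := intermediate_value_uIcc hDcont.continuousOn hzero
  have hFHw : F w = H w := by
    have : F w - H w = 0 := hw
    linarith
  -- hence g = h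
  have hgh : g = h := by
    have h3 : g • (w : AddCircle (1:ℝ)) = h • (w : AddCircle (1:ℝ)) := by
      rw [← hF.2 w, ← hH.2 w, hFHw]
    by_contra hne
    have hk : h⁻¹ * g ≠ 1 := by
      intro hc
      exact hne (inv_mul_eq_one.mp hc).symm
    refine hfree (h⁻¹ * g) hk (w : AddCircle (1:ℝ)) ?_
    rw [mul_smul, h3, inv_smul_smul]
  subst hgh
  -- D takes integer values everywhere
  have hint : ∀ s : ℝ, ∃ n : ℤ, D s = n := by
    intro s
    have h3 : ((F s : ℝ) : AddCircle (1:ℝ)) = ((H s : ℝ) : AddCircle (1:ℝ)) := by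
      rw [hF.2 s, hH.2 s]
    obtain ⟨n, hn⟩ := coe_eq_coe_iff.mp h3
    exact ⟨-n, by simp only [hD]; rw [hn]; push_cast; ring⟩
  -- but D is 0 at w and ≥ 1 at u, so it takes the value 1/2 somewhere
  obtain ⟨m, hm⟩ := hint v
  have hm1 : (1 : ℝ) ≤ D v := by
    rw [hm]
    rw [hm] at hDv
    exact_mod_cast (by exact_mod_cast hDv : (0:ℤ) < m)
  have hhalf : (1 / 2 : ℝ) ∈ uIcc (D w) (D v) := by
    rw [hw]
    exact Set.mem_uIcc.mpr (Or.inl ⟨by norm_num, le_trans (by norm_num) hm1⟩)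
  obtain ⟨z, -, hz⟩ := intermediate_value_uIcc hDcont.continuousOn hhalf
  obtain ⟨k, hk⟩ := hint z
  rw [hz] at hk
  exact int_ne_half k hk.symm

lemma tau_hom
    (hfree : ∀ g : G, g ≠ 1 → ∀ x : AddCircle (1 : ℝ), g • x ≠ x)
    {F H : CircleDeg1Lift} {g h : G} (hF : IsLiftOf F g) (hH : IsLiftOf H h) :
    CircleDeg1Lift.translationNumber (F * H)
      = CircleDeg1Lift.translationNumber F + CircleDeg1Lift.translationNumber H := by
  obtain ⟨u, hu⟩ := lift_isUnit hF
  have hconj : CircleDeg1Lift.translationNumber (F * H)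
      = CircleDeg1Lift.translationNumber (H * F) := by
    have h1 : H * F = ↑u⁻¹ * (F * H) * ↑u := by
      rw [← hu]
      rw [show (↑u⁻¹ : CircleDeg1Lift) * (↑u * H) * ↑u = (↑u⁻¹ * ↑u) * H * ↑u by
        simp only [mul_assoc], ← Units.val_mul, inv_mul_cancel]
      simp
    rw [h1, CircleDeg1Lift.translationNumber_conj_eq' u (F * H)]
  rcases lift_totality hfree (lift_mul hH hF) (lift_mul hF hH) with hle | hle
  · exact tau_add_of_le hconj hle
  · have := tau_add_of_le hconj.symm hle
    rw [hconj, this]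
    ring


end Holder13

/-- Hölder's theorem: a group acting freely by homeomorphisms on the circle `S¹ = ℝ/ℤ`
is abelian.  (A free action on the circle is automatically by orientation-preserving
homeomorphisms.) -/
theorem stmt_13 {G : Type*} [Group G] [MulAction G (AddCircle (1 : ℝ))]
    (hcont : ∀ g : G, Continuous fun x : AddCircle (1 : ℝ) => g • x)
    (hfree : ∀ g : G, g ≠ 1 → ∀ x : AddCircle (1 : ℝ), g • x ≠ x) :
    ∀ a b : G, a * b = b * a := by
  intro a b
  obtain ⟨F, hF⟩ := Holder13.exists_lift hcont hfree a
  obtain ⟨H, hH⟩ := Holder13.exists_lift hcont hfree b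
  have hHF : Holder13.IsLiftOf (H * F) (b * a) := Holder13.lift_mul hH hF
  obtain ⟨u, hu⟩ := Holder13.lift_isUnit hHF
  have huL : Holder13.IsLiftOf (↑u) (b * a) := by rwa [hu]
  have hinv : Holder13.IsLiftOf (↑u⁻¹) (b * a)⁻¹ := Holder13.lift_inv huL
  have hFH : Holder13.IsLiftOf (F * H) (a * b) := Holder13.lift_mul hF hH
  have hK : Holder13.IsLiftOf (↑u⁻¹ * (F * H)) ((b * a)⁻¹ * (a * b)) :=
    Holder13.lift_mul hinv hFH
  have htau : CircleDeg1Lift.translationNumber ((↑u⁻¹ : CircleDeg1Lift) * (F * H)) = 0 := by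
    rw [Holder13.tau_hom hfree hinv hFH, Holder13.tau_hom hfree hF hH,
      CircleDeg1Lift.translationNumber_units_inv, hu, Holder13.tau_hom hfree hH hF]
    ring
  obtain ⟨x, hx⟩ := CircleDeg1Lift.exists_eq_add_translationNumber _ hK.1
  rw [htau, add_zero] at hx
  have h1 : ((b * a)⁻¹ * (a * b)) • (x : AddCircle (1 : ℝ)) = (x : AddCircle (1 : ℝ)) := by
    rw [← hK.2 x, hx]
  have h2 : (b * a)⁻¹ * (a * b) = 1 := by
    by_contra hc
    exact hfree _ hc _ h1
  exact (inv_mul_eq_one.mp h2).symm
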